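/- The p×p matrix M with rows R_a = (a·q_1^{a(p-1)}, ..., a·q_p^{a(p-1)}) for a = 1,...,p−1 and last row (s/q_1, ..., s/q_p) where s = q_1⋯q_p, has nonzero determinant over the field of rational functions in q_1,...,q_p over a field of characteristic 0 or of characteristic coprime to (p−1)!. -/

import Mathlib

open Finset MvPolynomial

private lemma prod_monomial' {R : Type*} [CommSemiring R] {σ : Type*} {ι : Type*} [DecidableEq ι]
    (s : Finset ι) (e : ι → (σ →₀ ℕ)) (c : ι → R) :
    ∏ i ∈ s, (monomial (e i) (c i) : MvPolynomial σ R)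
      = monomial (∑ i ∈ s, e i) (∏ i ∈ s, c i) := by
  classical
  induction s using Finset.induction with
  | empty => simp
  | insert _ _ h ih =>
      rw [Finset.prod_insert h, Finset.sum_insert h, Finset.prod_insert h, ih, monomial_mul]

theorem stmt12 {k : Type*} [Field k] (p : ℕ) (hp : 2 ≤ p)
    (hinv : ∀ a : ℕ, 1 ≤ a → a ≤ p - 1 → (a : k) ≠ 0) :
    Matrix.det (Matrix.of fun a j : Fin p =>
      if (a : ℕ) < p - 1 then
        (((a : ℕ) + 1 : ℕ) : MvPolynomial (Fin p) k) *
          MvPolynomial.X j ^ (((a : ℕ) + 1) * (p - 1))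
      else ∏ i ∈ Finset.univ.erase j, MvPolynomial.X i) ≠ 0 := by
  classical
  have hp1 : 0 < p - 1 := by omega
  set last : Fin p := ⟨p - 1, by omega⟩ with hlastdef
  have hne_last : ∀ j : Fin p, j ≠ last ↔ (j : ℕ) < p - 1 := by
    intro j
    constructor
    · intro h
      rcases lt_or_ge (j : ℕ) (p - 1) with h' | h'
      · exact h'
      · exact absurd (Fin.ext (by have := j.isLt; omega : (j : ℕ) = p - 1)) h
    · intro h hj
      rw [hj] at h
      simp only [last] at h
      omega
  set E : Fin p → Fin p → (Fin p →₀ ℕ) := fun a i =>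
    if (a : ℕ) < p - 1 then Finsupp.single i (((a : ℕ) + 1) * (p - 1))
    else ∑ t ∈ univ.erase i, Finsupp.single t 1 with hE
  set c : Fin p → k := fun a =>
    if (a : ℕ) < p - 1 then (((a : ℕ) + 1 : ℕ) : k) else 1 with hc
  -- each entry is a monomial
  have hentry : ∀ a i : Fin p,
      (if (a : ℕ) < p - 1 then
        (((a : ℕ) + 1 : ℕ) : MvPolynomial (Fin p) k) *
          MvPolynomial.X i ^ (((a : ℕ) + 1) * (p - 1))
      else ∏ t ∈ Finset.univ.erase i, MvPolynomial.X t)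
      = monomial (E a i) (c a) := by
    intro a i
    by_cases h : (a : ℕ) < p - 1
    · rw [if_pos h]
      simp only [hE, hc, if_pos h]
      rw [X_pow_eq_monomial, ← map_natCast (C : k →+* MvPolynomial (Fin p) k) ((a : ℕ) + 1),
        C_mul_monomial, mul_one]
    · rw [if_neg h]
      simp only [hE, hc, if_neg h]
      have hX : ∀ t : Fin p, (X t : MvPolynomial (Fin p) k) = monomial (Finsupp.single t 1) 1 :=
        fun t => rfl
      rw [Finset.prod_congr rfl (fun t _ => hX t), prod_monomial']
      simp
  -- value of exponent sums
  have key : ∀ (σ : Equiv.Perm (Fin p)) (j : Fin p),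
      (∑ i, E (σ i) i) j
        = if σ j = last then 0 else ((σ j : ℕ) + 1) * (p - 1) + 1 := by
    intro σ j
    rw [Finsupp.finset_sum_apply]
    have htj : (E (σ j) j) j = if σ j = last then 0 else ((σ j : ℕ) + 1) * (p - 1) := by
      simp only [hE]
      by_cases h : (σ j : ℕ) < p - 1
      · rw [if_pos h, if_neg (by rw [← hne_last] at h; exact h), Finsupp.single_apply, if_pos rfl]
      · have : σ j = last := by
          by_contra hcon
          exact h ((hne_last _).1 hcon)
        rw [if_neg h, if_pos this, Finsupp.finset_sum_apply]
        apply Finset.sum_eq_zero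
        intro t ht
        rw [Finsupp.single_apply, if_neg (Finset.ne_of_mem_erase ht)]
    have hti : ∀ i ∈ univ.erase j, (E (σ i) i) j = if i = σ.symm last then 1 else 0 := by
      intro i hi
      have hij : i ≠ j := Finset.ne_of_mem_erase hi
      simp only [hE]
      by_cases h : (σ i : ℕ) < p - 1
      · rw [if_pos h, Finsupp.single_apply, if_neg hij, if_neg]
        intro hcon
        rw [← hne_last] at h
        exact h (by rw [hcon, Equiv.apply_symm_apply])
      · have hlasteq : σ i = last := by
          by_contra hcon
          exact h ((hne_last _).1 hcon)
        have hieq : i = σ.symm last := by rw [← hlasteq, Equiv.symm_apply_apply]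
        rw [if_neg h, if_pos hieq, Finsupp.finset_sum_apply]
        rw [Finset.sum_eq_single_of_mem j (Finset.mem_erase.2 ⟨hij.symm, Finset.mem_univ j⟩)]
        · rw [Finsupp.single_apply, if_pos rfl]
        · intro t ht htj
          rw [Finsupp.single_apply, if_neg htj]
    rw [← Finset.sum_erase_add _ _ (Finset.mem_univ j), Finset.sum_congr rfl hti, htj,
      Finset.sum_ite_eq' _ (σ.symm last) (fun _ => 1)]
    have hmem : σ.symm last ∈ univ.erase j ↔ ¬ (σ j = last) := by
      rw [Finset.mem_erase]
      constructor
      · intro h hcon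
        exact h.1 (by rw [← hcon, Equiv.symm_apply_apply])
      · intro h
        refine ⟨fun hcon => h ?_, Finset.mem_univ _⟩
        rw [← hcon, Equiv.apply_symm_apply]
    by_cases h : σ j = last
    · rw [if_neg (by rw [hmem]; exact fun hc => hc h), if_pos h, if_pos h]
    · rw [if_pos (hmem.2 h), if_neg h, if_neg h]
      omega
  -- injectivity of exponents
  have hFne : ∀ σ : Equiv.Perm (Fin p), σ ≠ 1 → (∑ i, E (σ i) i) ≠ ∑ i, E i i := by
    intro σ hσ heq
    apply hσ
    have key1 : ∀ j : Fin p, (∑ i, E i i) j = if j = last then 0 else ((j : ℕ) + 1) * (p - 1) + 1 := by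
      intro j
      have := key 1 j
      simp only [Equiv.Perm.one_apply] at this
      exact this
    have hval : ∀ j : Fin p,
        (if σ j = last then 0 else ((σ j : ℕ) + 1) * (p - 1) + 1)
          = if j = last then 0 else ((j : ℕ) + 1) * (p - 1) + 1 := by
      intro j
      rw [← key σ j, heq, key1 j]
    have hlast' : σ last = last := by
      have h1 := hval last
      rw [if_pos rfl] at h1
      by_contra hne
      rw [if_neg hne] at h1
      omega
    apply Equiv.ext
    intro j
    rw [Equiv.Perm.one_apply]
    by_cases hj : j = last
    · rw [hj, hlast']
    · have hσj : σ j ≠ last := fun hcon => hj (σ.injective (by rw [hcon, hlast']))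
      have h1 := hval j
      rw [if_neg hσj, if_neg hj] at h1
      have : (σ j : ℕ) = (j : ℕ) := by
        have h2 : ((σ j : ℕ) + 1) * (p - 1) = ((j : ℕ) + 1) * (p - 1) := by omega
        have := Nat.eq_of_mul_eq_mul_right hp1 h2
        omega
      exact Fin.ext this
  -- nonzero coefficient
  have hcne : ∏ i, c i ≠ 0 := by
    rw [Finset.prod_ne_zero_iff]
    intro i _
    simp only [hc]
    by_cases h : (i : ℕ) < p - 1
    · rw [if_pos h]
      exact hinv ((i : ℕ) + 1) (by omega) (by omega)
    · rw [if_neg h]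
      exact one_ne_zero
  intro hdet
  rw [Matrix.det_apply] at hdet
  have hdet' : ∑ σ : Equiv.Perm (Fin p),
      Equiv.Perm.sign σ • (monomial (∑ i, E (σ i) i) (∏ i, c (σ i)) : MvPolynomial (Fin p) k) = 0 := by
    rw [← hdet]
    apply Finset.sum_congr rfl
    intro σ _
    congr 1
    rw [← prod_monomial']
    apply Finset.prod_congr rfl
    intro i _
    rw [Matrix.of_apply, hentry (σ i) i]
  have h0 := congrArg (coeff (∑ i, E i i)) hdet'
  rw [coeff_zero, coeff_sum] at h0
  rw [Finset.sum_eq_single (1 : Equiv.Perm (Fin p))] at h0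
  · apply hcne
    rw [Equiv.Perm.sign_one] at h0
    simp only [Units.smul_def, Units.val_one, one_smul, Equiv.Perm.one_apply] at h0
    rw [coeff_monomial, if_pos rfl] at h0
    exact h0
  · intro σ _ hσ
    rw [Units.smul_def, coeff_smul, coeff_monomial, if_neg (hFne σ hσ), smul_zero]
  · intro h
    exact absurd (Finset.mem_univ _) h
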